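/- arXiv:2210.00915 — 3 statements merged into one kernel-verified Lean document; each statement's English description precedes it below -/
import Mathlib

section
/- Every 3-periodic function f : ℝ → ℝ can be written uniquely as f = g + h, where g is 1-periodic and h satisfies h(x+2) + h(x+1) + h(x) = 0 for all x; explicitly g(x) = (f(x) + f(x+1) + f(x+2))/3 and h(x) = f(x) - g(x). -/
theorem three_periodic_decomp (f : ℝ → ℝ)
    (hf : ∀ x : ℝ, f (x + 3) = f x) :
    (∀ x : ℝ, (fun x => (f x + f (x + 1) + f (x + 2)) / 3) (x + 1) =
      (fun x => (f x + f (x + 1) + f (x + 2)) / 3) x) ∧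
    (∀ x : ℝ, (f (x + 2) - (f (x + 2) + f (x + 3) + f (x + 4)) / 3) +
      (f (x + 1) - (f (x + 1) + f (x + 2) + f (x + 3)) / 3) +
      (f x - (f x + f (x + 1) + f (x + 2)) / 3) = 0) ∧
    (∀ x : ℝ, f x = (f x + f (x + 1) + f (x + 2)) / 3 +
      (f x - (f x + f (x + 1) + f (x + 2)) / 3)) ∧
    (∀ g₁ h₁ g₂ h₂ : ℝ → ℝ,
      (∀ x, g₁ (x + 1) = g₁ x) → (∀ x, h₁ (x + 2) + h₁ (x + 1) + h₁ x = 0) →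
      (∀ x, g₂ (x + 1) = g₂ x) → (∀ x, h₂ (x + 2) + h₂ (x + 1) + h₂ x = 0) →
      (∀ x, f x = g₁ x + h₁ x) → (∀ x, f x = g₂ x + h₂ x) →
      g₁ = g₂ ∧ h₁ = h₂) := by
  refine ⟨?_, ?_, ?_, ?_⟩
  · intro x
    have h1 := hf x
    have h2 : x + 1 + 1 = x + 2 := by ring
    have h3 : x + 1 + 2 = x + 3 := by ring
    simp only [h2, h3]
    linarith
  · intro x
    have h1 := hf x
    have h2 := hf (x + 1)
    have h3 : x + 1 + 3 = x + 4 := by ring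
    rw [h3] at h2
    linarith
  · intro x; ring
  · intro g₁ h₁ g₂ h₂ pg₁ ph₁ pg₂ ph₂ e₁ e₂
    have key : ∀ x, g₁ x = g₂ x := by
      intro x
      have d2 : g₁ (x + 2) = g₁ x := by
        have := pg₁ (x + 1)
        have h2 : x + 1 + 1 = x + 2 := by ring
        rw [h2] at this
        rw [this, pg₁ x]
      have d2' : g₂ (x + 2) = g₂ x := by
        have := pg₂ (x + 1)
        have h2 : x + 1 + 1 = x + 2 := by ring
        rw [h2] at this
        rw [this, pg₂ x]
      have a0 := e₁ x; have b0 := e₂ x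
      have a1 := e₁ (x + 1); have b1 := e₂ (x + 1)
      have a2 := e₁ (x + 2); have b2 := e₂ (x + 2)
      have s1 := ph₁ x; have s2 := ph₂ x
      have p1 := pg₁ x; have p2 := pg₂ x
      linarith
    constructor
    · funext x; exact key x
    · funext x
      have := e₁ x
      have := e₂ x
      have := key x
      linarith
end

section
/- Let S = {f : ℝ → ℝ | f(x+2) + f(x+1) + f(x) = 0 for all x}. Then the image of S under the forward difference operator Δ (where Δf(x) = f(x+1) - f(x)) equals S; that is, for every s ∈ S there exists f ∈ S with Δf = s, and Δf ∈ S whenever f ∈ S. -/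
theorem delta_image_of_S (S : Set (ℝ → ℝ))
    (hS : S = {f : ℝ → ℝ | ∀ x : ℝ, f (x + 2) + f (x + 1) + f x = 0}) :
    (fun f : ℝ → ℝ => fun x => f (x + 1) - f x) '' S = S := by
  subst hS
  ext s
  constructor
  · rintro ⟨f, hf, rfl⟩ x
    have h1 := hf x
    have h2 := hf (x + 1)
    have h3 := hf (x + 2)
    simp only [Set.mem_setOf_eq] at *
    ring_nf at *
    linarith
  · intro hs
    refine ⟨fun x => -(s (x + 1) + 2 * s x) / 3, ?_, ?_⟩
    · intro x
      have h1 := hs x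
      have h2 := hs (x + 1)
      simp only [Set.mem_setOf_eq] at *
      ring_nf at *
      linarith
    · funext x
      have h1 := hs x
      ring_nf at h1 ⊢
      linarith
end

section
/- Every 3-antiperiodic function f : ℝ → ℝ can be written uniquely as f = g + h, where g is 1-antiperiodic and h satisfies h(x+2) - h(x+1) + h(x) = 0 for all x. -/
theorem three_antiperiodic_decomp (f : ℝ → ℝ)
    (hf : ∀ x : ℝ, f (x + 3) = -f x) :
    ∃ g h : ℝ → ℝ,
      (∀ x : ℝ, g (x + 1) = -g x) ∧
      (∀ x : ℝ, h (x + 2) - h (x + 1) + h x = 0) ∧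
      (∀ x : ℝ, f x = g x + h x) ∧
      (∀ g' h' : ℝ → ℝ, (∀ x, g' (x + 1) = -g' x) →
        (∀ x, h' (x + 2) - h' (x + 1) + h' x = 0) →
        (∀ x, f x = g' x + h' x) → g' = g ∧ h' = h) := by
  refine ⟨fun x => (f x - f (x + 1) + f (x + 2)) / 3,
    fun x => f x - (f x - f (x + 1) + f (x + 2)) / 3, ?_, ?_, ?_, ?_⟩
  · intro x
    have h3 := hf x
    have e1 : x + 1 + 1 = x + 2 := by ring
    have e2 : x + 1 + 2 = x + 3 := by ring
    dsimp only; rw [e1, e2, h3]; ring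
  · intro x
    have h3 := hf x
    have e1 : x + 1 + 1 = x + 2 := by ring
    have e2 : x + 1 + 2 = x + 3 := by ring
    have e3 : x + 2 + 1 = x + 3 := by ring
    have e4 : x + 2 + 2 = x + 1 + 3 := by ring
    have h4 := hf (x + 1)
    dsimp only; rw [e1, e2, e3, e4, h3, h4]; ring
  · intro x; ring
  · intro g' h' hg' hh' hfe
    have key : ∀ x, g' x = (f x - f (x + 1) + f (x + 2)) / 3 := by
      intro x
      have a0 := hfe x
      have a1 := hfe (x + 1)
      have a2 := hfe (x + 2)
      have b := hh' x
      have c1 := hg' x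
      have c2 := hg' (x + 1)
      have e1 : x + 1 + 1 = x + 2 := by ring
      rw [e1] at c2
      linarith
    constructor
    · funext x; exact key x
    · funext x
      have := hfe x
      have := key x
      linarith
end
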